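/- The function f_Nc(x; m) := (1/4)·Q(x; 1, 2m-1, 1) on ℝ^{2m-1} is (0, 1)-smooth (convex and 1-smooth), and its optimal solution set X* satisfies dist²(0, X*) ≤ 2m/3. -/

import Mathlib

open scoped RealInnerProductSpace BigOperators

/-- Nesterov's chain quadratic `Q(x; ξ, m, ζ)` on `ℝ^{n+1}` (so `m = n+1 ≥ 1`). -/
noncomputable def Qfun {n : ℕ} (ξ ζ : ℝ) (x : EuclideanSpace ℝ (Fin (n + 1))) : ℝ :=
  ξ / 2 * (x 0 - 1) ^ 2 + 1 / 2 * ∑ t : Fin n, (x t.succ - x t.castSucc) ^ 2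
    + ζ / 2 * (x (Fin.last n)) ^ 2

/-- Nesterov's convex hard function `f_Nc(x; m) = (1/4)Q(x; 1, 2m-1, 1)` on `ℝ^{2m-1}`. -/
noncomputable def fNc (m : ℕ) (x : EuclideanSpace ℝ (Fin (2 * m - 2 + 1))) : ℝ :=
  1 / 4 * Qfun 1 1 x

open Fin Finset

noncomputable def DNc (n : ℕ) (y : EuclideanSpace ℝ (Fin (n+1))) :
    EuclideanSpace ℝ (Fin (n+1)) →L[ℝ] ℝ :=
  (1/4 : ℝ) • ((y 0 - 1) • (EuclideanSpace.proj 0)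
    + (∑ t : Fin n, (y t.succ - y t.castSucc) •
        (EuclideanSpace.proj t.succ - EuclideanSpace.proj t.castSucc))
    + (y (Fin.last n)) • EuclideanSpace.proj (Fin.last n))

lemma DNc_apply (n : ℕ) (y v : EuclideanSpace ℝ (Fin (n+1))) :
    DNc n y v = 1/4 * ((y 0 - 1) * v 0
      + (∑ t : Fin n, (y t.succ - y t.castSucc) * (v t.succ - v t.castSucc))
      + y (Fin.last n) * v (Fin.last n)) := by
  simp [DNc, ContinuousLinearMap.sum_apply]; ring

noncomputable def gNc (n : ℕ) (x : EuclideanSpace ℝ (Fin (n+1))) : ℝ :=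
  1/8 * ((x 0 - 1) ^ 2 + ∑ t : Fin n, (x t.succ - x t.castSucc) ^ 2
    + (x (Fin.last n)) ^ 2)

lemma hasFDerivAt_sq {E : Type*} [NormedAddCommGroup E] [NormedSpace ℝ E]
    {f : E → ℝ} {f' : E →L[ℝ] ℝ} {x : E} (hf : HasFDerivAt f f' x) :
    HasFDerivAt (fun y => f y ^ 2) ((2 * f x) • f') x := by
  have : HasFDerivAt (fun y => f y * f y) (f x • f' + f x • f') x := hf.mul hf
  simpa [pow_two, two_mul, add_smul] using this

lemma hasFDerivAt_gNc (n : ℕ) (y : EuclideanSpace ℝ (Fin (n+1))) :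
    HasFDerivAt (gNc n) (DNc n y) y := by
  have h0 : HasFDerivAt (fun x : EuclideanSpace ℝ (Fin (n+1)) => (x 0 - 1) ^ 2)
      ((2 * (y 0 - 1)) • (EuclideanSpace.proj (0 : Fin (n+1)))) y :=
    hasFDerivAt_sq (((EuclideanSpace.proj (0 : Fin (n+1)) : EuclideanSpace ℝ (Fin (n+1)) →L[ℝ] ℝ).hasFDerivAt (x := y)).sub_const 1)
  have hs : HasFDerivAt (fun x : EuclideanSpace ℝ (Fin (n+1)) =>
      ∑ t : Fin n, (x t.succ - x t.castSucc) ^ 2)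
      (∑ t : Fin n, (2 * (y t.succ - y t.castSucc)) •
        (EuclideanSpace.proj t.succ - EuclideanSpace.proj t.castSucc
          : EuclideanSpace ℝ (Fin (n+1)) →L[ℝ] ℝ)) y :=
    HasFDerivAt.fun_sum fun (t : Fin n) _ =>
      hasFDerivAt_sq (((EuclideanSpace.proj (t.succ : Fin (n+1)) : EuclideanSpace ℝ (Fin (n+1)) →L[ℝ] ℝ).hasFDerivAt (x := y)).sub
        ((EuclideanSpace.proj (t.castSucc : Fin (n+1)) : EuclideanSpace ℝ (Fin (n+1)) →L[ℝ] ℝ).hasFDerivAt (x := y)))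
  have hl : HasFDerivAt (fun x : EuclideanSpace ℝ (Fin (n+1)) => (x (Fin.last n)) ^ 2)
      ((2 * (y (Fin.last n))) • (EuclideanSpace.proj (Fin.last n))) y :=
    hasFDerivAt_sq ((EuclideanSpace.proj (Fin.last n) : EuclideanSpace ℝ (Fin (n+1)) →L[ℝ] ℝ).hasFDerivAt (x := y))
  have hD : DNc n y = (1/8 : ℝ) • ((2 * (y 0 - 1)) • (EuclideanSpace.proj (0 : Fin (n+1)))
      + (∑ t : Fin n, (2 * (y t.succ - y t.castSucc)) •
          (EuclideanSpace.proj t.succ - EuclideanSpace.proj t.castSucc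
            : EuclideanSpace ℝ (Fin (n+1)) →L[ℝ] ℝ))
      + (2 * (y (Fin.last n))) • EuclideanSpace.proj (Fin.last n)) := by
    ext v
    simp [DNc, ContinuousLinearMap.sum_apply, Finset.mul_sum]
    rw [show (∑ i : Fin n, (4:ℝ)⁻¹ * ((y i.succ - y i.castSucc) * (v i.succ - v i.castSucc)))
        = ∑ i : Fin n, (8:ℝ)⁻¹ * (2 * (y i.succ - y i.castSucc) * (v i.succ - v i.castSucc))
      from Finset.sum_congr rfl fun t _ => by ring]
    ring
  rw [hD]
  exact ((h0.add hs).add hl).const_mul (1/8 : ℝ)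

lemma gNc_taylor (n : ℕ) (x y : EuclideanSpace ℝ (Fin (n+1))) :
    gNc n x - gNc n y - DNc n y (x - y)
      = 1/8 * ((x 0 - y 0) ^ 2
        + ∑ t : Fin n, ((x t.succ - y t.succ) - (x t.castSucc - y t.castSucc)) ^ 2
        + (x (Fin.last n) - y (Fin.last n)) ^ 2) := by
  simp only [gNc, DNc_apply, PiLp.sub_apply]
  rw [show (∑ t : Fin n, (x t.succ - x t.castSucc) ^ 2)
      = ∑ t : Fin n, ((y t.succ - y t.castSucc) ^ 2
        + 2 * (y t.succ - y t.castSucc) * ((x t.succ - y t.succ) - (x t.castSucc - y t.castSucc))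
        + ((x t.succ - y t.succ) - (x t.castSucc - y t.castSucc)) ^ 2)
    from Finset.sum_congr rfl fun t _ => by ring]
  rw [Finset.sum_add_distrib, Finset.sum_add_distrib,
    show (∑ t : Fin n, 2 * (y t.succ - y t.castSucc)
        * ((x t.succ - y t.succ) - (x t.castSucc - y t.castSucc)))
      = 2 * ∑ t : Fin n, (y t.succ - y t.castSucc)
        * ((x t.succ - y t.succ) - (x t.castSucc - y t.castSucc)) from by
      rw [Finset.mul_sum]; exact Finset.sum_congr rfl fun t _ => by ring]
  ring

lemma norm_sq_eq (n : ℕ) (v : EuclideanSpace ℝ (Fin (n+1))) :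
    ‖v‖ ^ 2 = ∑ i, (v i) ^ 2 := by
  rw [EuclideanSpace.norm_eq, Real.sq_sqrt (by positivity)]
  simp [sq_abs]

lemma quad_le (n : ℕ) (v : EuclideanSpace ℝ (Fin (n+1))) :
    (v 0) ^ 2 + ∑ t : Fin n, (v t.succ - v t.castSucc) ^ 2 + (v (Fin.last n)) ^ 2
      ≤ 4 * ∑ i, (v i) ^ 2 := by
  have h1 : ∑ t : Fin n, (v t.succ - v t.castSucc) ^ 2
      ≤ ∑ t : Fin n, (2 * (v t.succ) ^ 2 + 2 * (v t.castSucc) ^ 2) :=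
    Finset.sum_le_sum fun t _ => by nlinarith [sq_nonneg (v t.succ + v t.castSucc)]
  have h2 : ∑ t : Fin n, (2 * (v t.succ) ^ 2 + 2 * (v t.castSucc) ^ 2)
      = 2 * (∑ t : Fin n, (v t.succ) ^ 2) + 2 * (∑ t : Fin n, (v t.castSucc) ^ 2) := by
    rw [Finset.sum_add_distrib, Finset.mul_sum, Finset.mul_sum]
  have h3 : (∑ i, (v i) ^ 2) = (v 0) ^ 2 + ∑ t : Fin n, (v t.succ) ^ 2 :=
    Fin.sum_univ_succ _
  have h4 : (∑ i, (v i) ^ 2) = (∑ t : Fin n, (v t.castSucc) ^ 2) + (v (Fin.last n)) ^ 2 :=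
    Fin.sum_univ_castSucc _
  linarith [sq_nonneg (v 0), sq_nonneg (v (Fin.last n))]

lemma sum_sq_range (N : ℕ) :
    ∑ i ∈ Finset.range N, ((i:ℝ)+1)^2 = (N:ℝ)*(N+1)*(2*N+1)/6 := by
  induction N with
  | zero => simp
  | succ k ih => rw [Finset.sum_range_succ, ih]; push_cast; ring

lemma sum_reflect_sq (N : ℕ) :
    ∑ i ∈ Finset.range N, ((N:ℝ) - i)^2 = ∑ i ∈ Finset.range N, ((i:ℝ)+1)^2 := by
  rw [← Finset.sum_range_reflect (fun j => ((j:ℝ)+1)^2) N]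
  refine Finset.sum_congr rfl fun j hj => ?_
  rw [Finset.mem_range] at hj
  rw [Nat.cast_sub (by omega : j ≤ N - 1), Nat.cast_sub (by omega : 1 ≤ N)]
  push_cast
  ring

lemma fNc_eq_gNc (m : ℕ) : fNc m = gNc (2 * m - 2) :=
  funext fun x => by unfold fNc gNc Qfun; ring

lemma inner_gradient_fNc (m : ℕ) (y v : EuclideanSpace ℝ (Fin (2 * m - 2 + 1))) :
    ⟪gradient (fNc m) y, v⟫ = DNc (2 * m - 2) y v := by
  have hf : HasFDerivAt (fNc m) (DNc (2 * m - 2) y) y := by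
    rw [fNc_eq_gNc]; exact hasFDerivAt_gNc _ y
  show ⟪(InnerProductSpace.toDual ℝ _).symm (fderiv ℝ (fNc m) y), v⟫ = _
  rw [hf.fderiv, InnerProductSpace.toDual_symm_apply]


/-- `f_Nc(·; m)` is `(0,1)`-smooth (convex and `1`-smooth) and the distance
from `0` to its optimal solution set `X*` satisfies `dist²(0, X*) ≤ 2m/3`. -/
theorem fNc_smooth_and_dist_bound (m : ℕ) (hm : 1 ≤ m) :
    (∀ x y : EuclideanSpace ℝ (Fin (2 * m - 2 + 1)),
      0 ≤ fNc m x - fNc m y - ⟪gradient (fNc m) y, x - y⟫ ∧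
        fNc m x - fNc m y - ⟪gradient (fNc m) y, x - y⟫ ≤ 1 / 2 * ‖x - y‖ ^ 2) ∧
      Metric.infDist (0 : EuclideanSpace ℝ (Fin (2 * m - 2 + 1)))
          {z : EuclideanSpace ℝ (Fin (2 * m - 2 + 1)) | ∀ w, fNc m z ≤ fNc m w} ^ 2 ≤
        2 * m / 3 := by
  set n : ℕ := 2 * m - 2 with hn
  constructor
  · intro x y
    have key : fNc m x - fNc m y - ⟪gradient (fNc m) y, x - y⟫
        = 1/8 * (((x - y) 0) ^ 2
          + ∑ t : Fin n, ((x - y) t.succ - (x - y) t.castSucc) ^ 2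
          + ((x - y) (Fin.last n)) ^ 2) := by
      rw [inner_gradient_fNc, fNc_eq_gNc, gNc_taylor]
      simp only [PiLp.sub_apply]
      rfl
    constructor
    · rw [key]; positivity
    · rw [key, norm_sq_eq]
      have := quad_le n (x - y)
      linarith
  · -- distance bound
    have hm' : (0:ℝ) < 2 * m := by positivity
    set xs : EuclideanSpace ℝ (Fin (n + 1)) :=
      WithLp.toLp 2 (fun i : Fin (n + 1) => 1 - ((i:ℝ) + 1) / (2 * m)) with hxs
    have hD0 : ∀ u : EuclideanSpace ℝ (Fin (n + 1)), DNc n xs u = 0 := by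
      intro u
      rw [DNc_apply]
      have e0 : xs 0 - 1 = -(1 / (2 * (m:ℝ))) := by
        simp only [hxs, PiLp.toLp_apply]
        norm_num
      have el : xs (Fin.last n) = 1 / (2 * (m:ℝ)) := by
        simp only [hxs]
        show 1 - (((Fin.last n : Fin (n+1)) : ℝ) + 1) / (2 * m) = 1 / (2 * (m:ℝ))
        rw [Fin.val_last, hn, Nat.cast_sub (by omega : 2 ≤ 2 * m)]
        push_cast
        field_simp
        ring
      have es : ∀ t : Fin n, xs t.succ - xs t.castSucc = -(1 / (2 * (m:ℝ))) := by
        intro t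
        show (1 - (((t.succ : Fin (n+1)) : ℝ) + 1) / (2 * m))
          - (1 - (((t.castSucc : Fin (n+1)) : ℝ) + 1) / (2 * m)) = _
        rw [Fin.val_succ, Fin.coe_castSucc]
        push_cast
        ring
      have ht : ∑ t : Fin n, (u t.succ - u t.castSucc) = u (Fin.last n) - u 0 := by
        rw [Finset.sum_sub_distrib]
        have h3 : (∑ i, u i) = u 0 + ∑ t : Fin n, u t.succ := Fin.sum_univ_succ _
        have h4 : (∑ i, u i) = (∑ t : Fin n, u t.castSucc) + u (Fin.last n) :=
          Fin.sum_univ_castSucc _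
        linarith
      rw [e0, el,
        show (∑ t : Fin n, (xs t.succ - xs t.castSucc) * (u t.succ - u t.castSucc))
          = ∑ t : Fin n, (-(1 / (2 * (m:ℝ)))) * (u t.succ - u t.castSucc) from
          Finset.sum_congr rfl fun t _ => by rw [es t],
        ← Finset.mul_sum, ht]
      ring
    have hmem : xs ∈ {z : EuclideanSpace ℝ (Fin (n + 1)) | ∀ w, fNc m z ≤ fNc m w} := by
      intro w
      have h1 := gNc_taylor n w xs
      rw [hD0] at h1
      have h2 : 0 ≤ gNc n w - gNc n xs := by
        rw [sub_zero] at h1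
        rw [h1]; positivity
      rw [fNc_eq_gNc]
      linarith
    have h5 : Metric.infDist (0 : EuclideanSpace ℝ (Fin (n + 1)))
        {z : EuclideanSpace ℝ (Fin (n + 1)) | ∀ w, fNc m z ≤ fNc m w} ≤ ‖xs‖ := by
      have := Metric.infDist_le_dist_of_mem (x := (0 : EuclideanSpace ℝ (Fin (n+1)))) hmem
      rwa [dist_comm, dist_zero_right] at this
    have h6 : Metric.infDist (0 : EuclideanSpace ℝ (Fin (n + 1)))
        {z : EuclideanSpace ℝ (Fin (n + 1)) | ∀ w, fNc m z ≤ fNc m w} ^ 2 ≤ ‖xs‖ ^ 2 :=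
      pow_le_pow_left₀ Metric.infDist_nonneg h5 2
    refine h6.trans ?_
    rw [norm_sq_eq]
    have hcast : ((n:ℝ) + 1) = 2 * m - 1 := by
      rw [hn, Nat.cast_sub (by omega : 2 ≤ 2 * m)]; push_cast; ring
    have hsum : (∑ i : Fin (n+1), (xs i) ^ 2)
        = ∑ k ∈ Finset.range (n+1), (1 - ((k:ℝ) + 1) / (2 * m)) ^ 2 :=
      Fin.sum_univ_eq_sum_range (fun k => (1 - ((k:ℝ) + 1) / (2 * m)) ^ 2) (n+1)
    rw [hsum]
    have hterm : ∀ k ∈ Finset.range (n+1),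
        (1 - ((k:ℝ) + 1) / (2 * m)) ^ 2 = (((n+1:ℕ):ℝ) - k) ^ 2 / (2 * m) ^ 2 := by
      intro k _
      rw [← div_pow]
      congr 1
      push_cast
      rw [hcast]
      field_simp
      ring
    rw [Finset.sum_congr rfl hterm, ← Finset.sum_div, sum_reflect_sq, sum_sq_range]
    rw [div_le_iff₀ (by positivity)]
    push_cast
    rw [Nat.cast_sub (by omega : 2 ≤ 2 * m)]
    push_cast
    have hm1 : (1:ℝ) ≤ m := by exact_mod_cast hm
    nlinarith [hm1]
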